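/- The clone generated by binary AND, binary OR, and the binary function (x,y) ↦ x ⊕ y ⊕ 1 (i.e., (x,y) ↦ !(xor x y)) equals the clone generated by g₁ together with the constant function true, where g₁(x,y,z) = x ∧ (y ∨ ¬z): a Boolean function f : (Fin n → Bool) → Bool belongs to the first clone if and only if it belongs to the second. -/
import Mathlib


/-- The clone generated by a set `B` of Boolean functions: the smallest family containing all
projections and `B`, and closed under composition. -/
inductive InClone (B : (k : ℕ) → ((Fin k → Bool) → Bool) → Prop) :
    (n : ℕ) → ((Fin n → Bool) → Bool) → Prop
  | proj {n : ℕ} (i : Fin n) : InClone B n (fun x => x i)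
  | base {k : ℕ} {g : (Fin k → Bool) → Bool} (hg : B k g) : InClone B k g
  | comp {k n : ℕ} {g : (Fin k → Bool) → Bool} {h : Fin k → ((Fin n → Bool) → Bool)}
      (hg : InClone B k g) (hh : ∀ i, InClone B n (h i)) :
      InClone B n (fun x => g (fun i => h i x))

/-- g₁(x,y,z) = x ∧ (y ∨ ¬z). -/
def g1 : (Fin 3 → Bool) → Bool := fun x => x 0 && (x 1 || !x 2)

/-- The generating set {∧, ∨, x ⊕ y ⊕ 1}. -/
inductive XnorBase : (k : ℕ) → ((Fin k → Bool) → Bool) → Prop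
  | and : XnorBase 2 (fun x => x 0 && x 1)
  | or : XnorBase 2 (fun x => x 0 || x 1)
  | xnor : XnorBase 2 (fun x => !(xor (x 0) (x 1)))

/-- The generating set {g₁, 1}. -/
inductive G1OneBase : (k : ℕ) → ((Fin k → Bool) → Bool) → Prop
  | g1 : G1OneBase 3 g1
  | one : G1OneBase 1 (fun _ => true)

theorem InClone.congr {B n f g} (h : InClone B n f) (hfg : f = g) : InClone B n g := hfg ▸ h

theorem clone_mono {B C : (k : ℕ) → ((Fin k → Bool) → Bool) → Prop}
    (hBC : ∀ k g, B k g → InClone C k g) {n f} (h : InClone B n f) : InClone C n f := by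
  induction h with
  | proj i => exact .proj i
  | base hg => exact hBC _ _ hg
  | comp hg hh ihg ihh => exact .comp ihg ihh

-- XnorBase side
theorem xnor_one : InClone XnorBase 1 (fun _ => true) := by
  have := InClone.comp (.base XnorBase.xnor) (h := ![fun x : Fin 1 → Bool => x 0, fun x => x 0])
    (fun i => by fin_cases i <;> simp only [Matrix.cons_val_zero, Matrix.cons_val_one, Matrix.head_cons, Matrix.cons_val_two, Matrix.tail_cons] <;> first | exact .proj _ | assumption | exact g1_one2 | exact g1_imp)
  exact this.congr (by funext x; cases x 0 <;> simp)

theorem xnor_g1 : InClone XnorBase 3 g1 := by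
  have hand : InClone XnorBase 3 (fun x : Fin 3 → Bool => x 2 && x 1) := by
    have := InClone.comp (.base XnorBase.and) (h := ![fun x : Fin 3 → Bool => x 2, fun x => x 1])
      (fun i => by fin_cases i <;> simp only [Matrix.cons_val_zero, Matrix.cons_val_one, Matrix.head_cons, Matrix.cons_val_two, Matrix.tail_cons] <;> first | exact .proj _ | assumption | exact g1_one2 | exact g1_imp)
    exact this.congr (by funext x; simp)
  have himp : InClone XnorBase 3 (fun x : Fin 3 → Bool => !(xor (x 2) (x 2 && x 1))) := by
    have := InClone.comp (.base XnorBase.xnor)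
      (h := ![fun x : Fin 3 → Bool => x 2, fun x => x 2 && x 1])
      (fun i => by fin_cases i <;> simp only [Matrix.cons_val_zero, Matrix.cons_val_one, Matrix.head_cons, Matrix.cons_val_two, Matrix.tail_cons] <;> first | exact .proj _ | assumption | exact g1_one2 | exact g1_imp)
    exact this.congr (by funext x; simp)
  have := InClone.comp (.base XnorBase.and)
    (h := ![fun x : Fin 3 → Bool => x 0, fun x => !(xor (x 2) (x 2 && x 1))])
    (fun i => by fin_cases i <;> simp only [Matrix.cons_val_zero, Matrix.cons_val_one, Matrix.head_cons, Matrix.cons_val_two, Matrix.tail_cons] <;> first | exact .proj _ | assumption | exact g1_one2 | exact g1_imp)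
  exact this.congr (by funext x; simp [g1]; cases x 0 <;> cases x 1 <;> cases x 2 <;> rfl)

-- G1OneBase side
theorem g1_one2 : InClone G1OneBase 2 (fun _ => true) := by
  have := InClone.comp (.base G1OneBase.one) (h := ![fun x : Fin 2 → Bool => x 0])
    (fun i => by fin_cases i <;> simp only [Matrix.cons_val_zero, Matrix.cons_val_one, Matrix.head_cons, Matrix.cons_val_two, Matrix.tail_cons] <;> first | exact .proj _ | assumption | exact g1_one2 | exact g1_imp)
  exact this.congr (by funext x; simp)

theorem g1_and : InClone G1OneBase 2 (fun x => x 0 && x 1) := by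
  have := InClone.comp (.base G1OneBase.g1)
    (h := ![fun x : Fin 2 → Bool => x 0, fun x => x 1, fun _ => true])
    (fun i => by fin_cases i <;> simp only [Matrix.cons_val_zero, Matrix.cons_val_one, Matrix.head_cons, Matrix.cons_val_two, Matrix.tail_cons] <;> first | exact .proj _ | assumption | exact g1_one2 | exact g1_imp)
  exact this.congr (by funext x; simp [g1])

theorem g1_imp : InClone G1OneBase 2 (fun x => !x 0 || x 1) := by
  have := InClone.comp (.base G1OneBase.g1)
    (h := ![fun _ : Fin 2 → Bool => true, fun x => x 1, fun x => x 0])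
    (fun i => by fin_cases i <;> simp only [Matrix.cons_val_zero, Matrix.cons_val_one, Matrix.head_cons, Matrix.cons_val_two, Matrix.tail_cons] <;> first | exact .proj _ | assumption | exact g1_one2 | exact g1_imp)
  exact this.congr (by funext x; simp [g1]; cases x 0 <;> cases x 1 <;> rfl)

theorem g1_or : InClone G1OneBase 2 (fun x => x 0 || x 1) := by
  have h1 : InClone G1OneBase 2 (fun x : Fin 2 → Bool => !(!x 0 || x 1) || x 1) := by
    have := InClone.comp g1_imp
      (h := ![fun x : Fin 2 → Bool => !x 0 || x 1, fun x => x 1])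
      (fun i => by fin_cases i <;> simp only [Matrix.cons_val_zero, Matrix.cons_val_one, Matrix.head_cons, Matrix.cons_val_two, Matrix.tail_cons] <;> first | exact .proj _ | assumption | exact g1_one2 | exact g1_imp)
    exact this.congr (by funext x; simp)
  exact h1.congr (by funext x; cases x 0 <;> cases x 1 <;> rfl)

theorem g1_xnor : InClone G1OneBase 2 (fun x => !(xor (x 0) (x 1))) := by
  have himp2 : InClone G1OneBase 2 (fun x : Fin 2 → Bool => !x 1 || x 0) := by
    have := InClone.comp g1_imp (h := ![fun x : Fin 2 → Bool => x 1, fun x => x 0])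
      (fun i => by fin_cases i <;> simp only [Matrix.cons_val_zero, Matrix.cons_val_one, Matrix.head_cons, Matrix.cons_val_two, Matrix.tail_cons] <;> first | exact .proj _ | assumption | exact g1_one2 | exact g1_imp)
    exact this.congr (by funext x; simp)
  have := InClone.comp g1_and
    (h := ![fun x : Fin 2 → Bool => !x 0 || x 1, fun x => !x 1 || x 0])
    (fun i => by fin_cases i <;> simp only [Matrix.cons_val_zero, Matrix.cons_val_one, Matrix.head_cons, Matrix.cons_val_two, Matrix.tail_cons] <;> first | exact .proj _ | assumption | exact g1_one2 | exact g1_imp)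
  exact this.congr (by funext x; simp; cases x 0 <;> cases x 1 <;> rfl)

/-- [∧, ∨, x ⊕ y ⊕ 1] = [g₁, 1]. -/
theorem clone_xnor_eq_clone_g1_one {n : ℕ} (f : (Fin n → Bool) → Bool) :
    InClone XnorBase n f ↔ InClone G1OneBase n f := by
  constructor
  · refine clone_mono fun k g hg => ?_
    cases hg
    · exact g1_and
    · exact g1_or
    · exact g1_xnor
  · refine clone_mono fun k g hg => ?_
    cases hg
    · exact xnor_g1
    · exact xnor_one
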